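/- arXiv:1612.09055 — 2 statements merged into one kernel-verified Lean document; each statement's English description precedes it below -/
import Mathlib

section
/- Let f(x) = e^{i log(1+|x|)} on ℝ, and let μ^t_ε (t ≠ 0 fixed) be the probability measures with density c_ε ρ(c_ε x), where ρ is the standard Gaussian density and c_ε = ε/√(t²+ε⁴). Then the net (⟨μ^t_ε, f⟩)_{ε∈(0,1]} has uncountably many cluster points in ℂ: for every α ∈ [0,2π), 2γe^{iα} is a cluster point, where γ = ∫₀^∞ e^{i log y} ρ(y) dy ≠ 0. -/
open MeasureTheory Filter

noncomputable section

section ClusterAux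
open Set Complex

lemma norm_exp_I_mul_real (x : ℝ) : ‖Complex.exp (Complex.I * (x:ℂ))‖ = 1 := by
  rw [mul_comm, Complex.norm_exp_ofReal_mul_I]

lemma step1 (ρ : ℝ → ℝ) (hρeven : ∀ x, ρ (-x) = ρ x) (hρnn : ∀ x, 0 ≤ ρ x)
    (hρint : Integrable ρ) (hρmeas : Measurable ρ) {c : ℝ} (hc : 0 < c) :
    (∫ x : ℝ, Complex.exp (Complex.I * Real.log (1 + |x|)) * ((c * ρ (c * x) : ℝ) : ℂ))
      = 2 * Complex.exp (-(Complex.I * Real.log c)) *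
        ∫ y in Ioi (0:ℝ), Complex.exp (Complex.I * Real.log (c + y)) * ((ρ y : ℝ) : ℂ) := by
  set g : ℝ → ℂ := fun y => Complex.exp (Complex.I * Real.log (1 + |y| / c)) * ((ρ y : ℝ) : ℂ)
    with hg
  have hgmeas : Measurable g := by
    unfold g
    exact (Complex.measurable_exp.comp (measurable_const.mul
      (Complex.measurable_ofReal.comp (Real.measurable_log.comp
        (measurable_const.add (measurable_abs.div_const c)))))).mul
      (Complex.measurable_ofReal.comp hρmeas)
  have hgint : Integrable g := by
    refine Integrable.mono' (hρint.norm) hgmeas.aestronglyMeasurable ?_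
    filter_upwards with y
    rw [hg]
    simp only [norm_mul, norm_exp_I_mul_real, one_mul, Complex.norm_real]
    exact le_refl _
  -- substitution y = c * x
  have h1 : (∫ x : ℝ, Complex.exp (Complex.I * Real.log (1 + |x|)) * ((c * ρ (c * x) : ℝ) : ℂ))
      = |c⁻¹| • ∫ y : ℝ, (c:ℂ) * g y := by
    rw [← MeasureTheory.Measure.integral_comp_mul_left (fun y => (c:ℂ) * g y) c]
    congr 1 with x
    rw [hg]
    have habs : |c * x| / c = |x| := by
      rw [abs_mul, abs_of_pos hc, mul_comm, mul_div_assoc, div_self hc.ne', mul_one]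
    simp only [habs]
    push_cast
    ring
  have h2 : (∫ y : ℝ, (c:ℂ) * g y) = (c:ℂ) * ∫ y : ℝ, g y := MeasureTheory.integral_const_mul _ _
  -- evenness
  have h3 : (∫ y : ℝ, g y) = 2 * ∫ y in Ioi (0:ℝ), g y := by
    have hsplit : (∫ y in Iic (0:ℝ), g y) + (∫ y in Ioi (0:ℝ), g y) = ∫ y : ℝ, g y := by
      rw [← setIntegral_union (Iic_disjoint_Ioi le_rfl) measurableSet_Ioi
        hgint.integrableOn hgint.integrableOn, Iic_union_Ioi, setIntegral_univ]
    have hneg : (∫ y in Iic (0:ℝ), g y) = ∫ y in Ioi (0:ℝ), g y := by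
      rw [show Iic (0:ℝ) = Iic (-0) by norm_num, ← integral_comp_neg_Ioi]
      refine setIntegral_congr_fun measurableSet_Ioi fun y _ => ?_
      rw [hg]
      simp [hρeven y]
    rw [← hsplit, hneg]; ring
  -- pointwise identity on Ioi 0
  have h4 : (∫ y in Ioi (0:ℝ), g y)
      = Complex.exp (-(Complex.I * Real.log c)) *
        ∫ y in Ioi (0:ℝ), Complex.exp (Complex.I * Real.log (c + y)) * ((ρ y : ℝ) : ℂ) := by
    rw [← MeasureTheory.integral_const_mul]
    refine setIntegral_congr_fun measurableSet_Ioi fun y hy => ?_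
    have hy0 : (0:ℝ) < y := hy
    have : 1 + y / c = (c + y) / c := by field_simp
    have hlog : Real.log (1 + |y| / c) = Real.log (c + y) - Real.log c := by
      rw [abs_of_pos hy0, this, Real.log_div (by positivity) hc.ne']
    show Complex.exp (Complex.I * Real.log (1 + |y| / c)) * ((ρ y : ℝ) : ℂ) = _
    rw [hlog]
    push_cast
    rw [mul_sub, Complex.exp_sub]
    rw [Complex.exp_neg]
    rw [eq_inv_mul_iff_mul_eq₀ (Complex.exp_ne_zero _)]
    field_simp [Complex.exp_ne_zero]
  rw [h1, h2, h3, h4]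
  have : |c⁻¹| = c⁻¹ := abs_of_pos (by positivity)
  rw [this]
  push_cast [Complex.real_smul]
  have hcne : (c:ℂ) ≠ 0 := by exact_mod_cast hc.ne'
  field_simp

lemma step2 (ρ : ℝ → ℝ) (hρnn : ∀ x, 0 ≤ ρ x) (hρint : Integrable ρ) (hρmeas : Measurable ρ)
    (r : ℕ → ℝ) (hr : Tendsto r atTop (nhds 0)) :
    Tendsto (fun n => ∫ y in Ioi (0:ℝ), Complex.exp (Complex.I * Real.log (r n + y)) * ((ρ y : ℝ) : ℂ))
      atTop (nhds (∫ y in Ioi (0:ℝ), Complex.exp (Complex.I * Real.log y) * ((ρ y : ℝ) : ℂ))) := by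
  refine MeasureTheory.tendsto_integral_of_dominated_convergence ρ ?_ hρint.integrableOn ?_ ?_
  · intro n
    exact ((Complex.measurable_exp.comp (measurable_const.mul
      (Complex.measurable_ofReal.comp (Real.measurable_log.comp
        (measurable_const.add measurable_id))))).mul
      (Complex.measurable_ofReal.comp hρmeas)).aestronglyMeasurable
  · intro n
    filter_upwards with y
    rw [norm_mul, norm_exp_I_mul_real, one_mul, Complex.norm_real]
    exact le_of_eq (abs_of_nonneg (hρnn y))
  · filter_upwards [ae_restrict_mem measurableSet_Ioi] with y hy
    have hy0 : (0:ℝ) < y := hy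
    have h1 : Tendsto (fun n => r n + y) atTop (nhds y) := by
      simpa using hr.add (tendsto_const_nhds (x := y))
    have h2 : Tendsto (fun n => Real.log (r n + y)) atTop (nhds (Real.log y)) :=
      ((Real.continuousAt_log hy0.ne').tendsto).comp h1
    have h3 : Tendsto (fun n => Complex.exp (Complex.I * Real.log (r n + y))) atTop
        (nhds (Complex.exp (Complex.I * Real.log y))) := by
      exact (Complex.continuous_exp.tendsto _).comp
        ((continuous_const.mul Complex.continuous_ofReal).tendsto _ |>.comp h2)
    exact h3.mul tendsto_const_nhds

lemma cpow_I_of_pos {y : ℝ} (hy : 0 < y) :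
    (y:ℂ) ^ (Complex.I) = Complex.exp (Complex.I * Real.log y) := by
  rw [Complex.cpow_def_of_ne_zero (by exact_mod_cast hy.ne'), ← Complex.ofReal_log hy.le,
    mul_comm]

lemma K_eq : Complex.Gamma ((1 + Complex.I)/2)
    = 2 * ∫ x in Ioi (0:ℝ), (x:ℂ) ^ (Complex.I) * (Real.exp (-(x^2)) : ℂ) := by
  have h := integral_comp_rpow_Ioi_of_pos
    (g := fun t : ℝ => (t:ℂ) ^ ((Complex.I - 1)/2) * (Real.exp (-t) : ℂ)) (p := 2) zero_lt_two
  rw [Complex.Gamma_eq_integral (by simp : 0 < ((1 + Complex.I)/2).re), Complex.GammaIntegral]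
  have hcongr : ∀ x:ℝ, (Real.exp (-x):ℂ) * (x:ℂ)^(((1:ℂ)+Complex.I)/2-1)
      = (x:ℂ)^((Complex.I-1)/2) * (Real.exp (-x):ℂ) := fun x => by
    rw [show ((1:ℂ)+Complex.I)/2-1 = (Complex.I-1)/2 from by ring]; ring
  simp_rw [hcongr]
  rw [← h, ← MeasureTheory.integral_const_mul]
  refine setIntegral_congr_fun measurableSet_Ioi fun x hx => ?_
  have hx0 : (0:ℝ) < x := hx
  have hxne : (x:ℂ) ≠ 0 := by exact_mod_cast hx0.ne'
  have hrp : x ^ (2:ℝ) = x ^ 2 := by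
    rw [show (2:ℝ) = ((2:ℕ):ℝ) by norm_num, Real.rpow_natCast]
  have hcp : ((x ^ 2 : ℝ):ℂ) ^ ((Complex.I - 1)/2) = (x:ℂ) ^ (Complex.I - 1) := by
    rw [Complex.cpow_def_of_ne_zero (by exact_mod_cast (pow_pos hx0 2).ne'),
      Complex.cpow_def_of_ne_zero hxne,
      ← Complex.ofReal_log (by positivity), ← Complex.ofReal_log hx0.le,
      Real.log_pow]
    push_cast
    ring_nf
  have hsub : (x:ℂ) ^ (Complex.I - 1) * (x:ℂ) = (x:ℂ) ^ Complex.I := by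
    have h1 := Complex.cpow_add (Complex.I - 1) 1 hxne
    rw [Complex.cpow_one] at h1
    rw [← h1]
    norm_num
  simp only [hrp, hcp]
  rw [show (2:ℝ) - 1 = 1 by norm_num, Real.rpow_one, Complex.real_smul]
  push_cast
  rw [show ((2:ℂ)*(x:ℂ)) * ((x:ℂ)^(Complex.I-1) * Complex.exp (-(x:ℂ)^2))
    = 2 * (((x:ℂ)^(Complex.I-1) * (x:ℂ)) * Complex.exp (-(x:ℂ)^2)) from by ring, hsub]

lemma gamma_ne (ρ : ℝ → ℝ) (hρ : ∀ x, ρ x = Real.exp (-(x ^ 2) / 2) / Real.sqrt (2 * Real.pi)) :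
    (∫ y in Ioi (0:ℝ), Complex.exp (Complex.I * Real.log y) * ((ρ y : ℝ) : ℂ)) ≠ 0 := by
  have hs2 : (0:ℝ) < Real.sqrt 2 := Real.sqrt_pos.mpr two_pos
  have hs2pi : (0:ℝ) < Real.sqrt (2 * Real.pi) := Real.sqrt_pos.mpr (by positivity)
  set K : ℂ := ∫ x in Ioi (0:ℝ), (x:ℂ) ^ (Complex.I) * (Real.exp (-(x^2)) : ℂ) with hK
  have hKne : K ≠ 0 := by
    intro h
    have := K_eq
    rw [← hK, h, mul_zero] at this
    exact Complex.Gamma_ne_zero_of_re_pos (by simp) this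
  have hS : (∫ y in Ioi (0:ℝ), (y:ℂ) ^ (Complex.I) * (Real.exp (-(y^2)/2) : ℂ))
      = (Real.sqrt 2 : ℝ) • (((Real.sqrt 2 : ℝ):ℂ) ^ (Complex.I) * K) := by
    have h := integral_comp_mul_left_Ioi
      (g := fun y : ℝ => (y:ℂ) ^ (Complex.I) * (Real.exp (-(y^2)/2) : ℂ)) 0 hs2
    rw [mul_zero] at h
    have h2 : (∫ x in Ioi (0:ℝ),
        ((Real.sqrt 2 * x : ℝ):ℂ) ^ (Complex.I) * (Real.exp (-((Real.sqrt 2 * x)^2)/2) : ℂ))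
        = ((Real.sqrt 2 : ℝ):ℂ) ^ (Complex.I) * K := by
      rw [hK, ← MeasureTheory.integral_const_mul]
      refine setIntegral_congr_fun measurableSet_Ioi fun x hx => ?_
      have hx0 : (0:ℝ) < x := hx
      have hexp : -((Real.sqrt 2 * x)^2)/2 = -(x^2) := by
        rw [mul_pow, Real.sq_sqrt two_pos.le]; ring
      rw [hexp, Complex.ofReal_mul, Complex.mul_cpow_ofReal_nonneg hs2.le hx0.le]
      ring
    rw [h2] at h
    have h3 := congrArg (fun z => (Real.sqrt 2 : ℝ) • z) h
    simp only [smul_smul, mul_inv_cancel₀ hs2.ne', one_smul] at h3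
    exact h3.symm
  have hSne : (∫ y in Ioi (0:ℝ), (y:ℂ) ^ (Complex.I) * (Real.exp (-(y^2)/2) : ℂ)) ≠ 0 := by
    rw [hS, Complex.real_smul]
    refine mul_ne_zero (by exact_mod_cast hs2.ne') (mul_ne_zero ?_ hKne)
    rw [Ne, Complex.cpow_eq_zero_iff]
    push_neg
    intro hc
    exact absurd hc (by exact_mod_cast hs2.ne')
  have heq : (∫ y in Ioi (0:ℝ), Complex.exp (Complex.I * Real.log y) * ((ρ y : ℝ) : ℂ))
      = ((Real.sqrt (2 * Real.pi) : ℝ):ℂ)⁻¹ *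
        ∫ y in Ioi (0:ℝ), (y:ℂ) ^ (Complex.I) * (Real.exp (-(y^2)/2) : ℂ) := by
    rw [← MeasureTheory.integral_const_mul]
    refine setIntegral_congr_fun measurableSet_Ioi fun y hy => ?_
    have hy0 : (0:ℝ) < y := hy
    rw [hρ y, ← cpow_I_of_pos hy0]
    push_cast
    ring
  rw [heq]
  exact mul_ne_zero (inv_ne_zero (by exact_mod_cast hs2pi.ne')) hSne

end ClusterAux

open Set in
/-- with `f(x) = e^{i log(1+|x|)}` and `μ^t_ε` the probability measures with
Gaussian density `c_ε ρ(c_ε x)`, `c_ε = ε/√(t²+ε⁴)`, the net `⟨μ^t_ε, f⟩` has, for every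
`α ∈ [0,2π)`, the cluster point `2γe^{iα}`, where `γ = ∫₀^∞ e^{i log y} ρ(y) dy ≠ 0`. -/
theorem uncountably_many_cluster_points
    (ρ : ℝ → ℝ) (hρ : ∀ x, ρ x = Real.exp (-(x ^ 2) / 2) / Real.sqrt (2 * Real.pi))
    (t : ℝ) (ht : t ≠ 0)
    (γ : ℂ) (hγ : γ = ∫ y in Set.Ioi (0 : ℝ), Complex.exp (Complex.I * Real.log y) * (ρ y : ℂ)) :
    γ ≠ 0 ∧
    ∀ α : ℝ, α ∈ Set.Ico (0 : ℝ) (2 * Real.pi) →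
      MapClusterPt (2 * γ * Complex.exp (Complex.I * (α : ℂ)))
        (nhdsWithin (0 : ℝ) (Set.Ioi 0))
        (fun ε : ℝ => ∫ x : ℝ, Complex.exp (Complex.I * Real.log (1 + |x|)) *
          (((ε / Real.sqrt (t ^ 2 + ε ^ 4)) * ρ ((ε / Real.sqrt (t ^ 2 + ε ^ 4)) * x) : ℝ) : ℂ)) := by
  -- basic facts about ρ
  have hρeven : ∀ x, ρ (-x) = ρ x := fun x => by rw [hρ, hρ]; ring_nf
  have hρnn : ∀ x, 0 ≤ ρ x := fun x => by rw [hρ]; positivity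
  have hρmeas : Measurable ρ := by
    rw [funext hρ]
    exact (Real.measurable_exp.comp ((measurable_id.pow_const 2).neg.div_const 2)).div_const _
  have hρint : Integrable ρ := by
    have h := (integrable_exp_neg_mul_sq (show (0:ℝ) < 1/2 by norm_num)).div_const
      (Real.sqrt (2 * Real.pi))
    refine h.congr (by filter_upwards with x; rw [hρ]; ring_nf)
  refine ⟨by rw [hγ]; exact gamma_ne ρ hρ, fun α hα => ?_⟩
  -- the density scaling function
  set c : ℝ → ℝ := fun ε => ε / Real.sqrt (t ^ 2 + ε ^ 4) with hcdef
  have hden : ∀ ε : ℝ, 0 < t ^ 2 + ε ^ 4 := fun ε => by positivity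
  have hsq : ∀ ε : ℝ, 0 < Real.sqrt (t ^ 2 + ε ^ 4) := fun ε => Real.sqrt_pos.mpr (hden ε)
  have hc_cont : Continuous c := by
    apply Continuous.div continuous_id
    · exact Real.continuous_sqrt.comp (by continuity)
    · exact fun ε => (hsq ε).ne'
  have hc_pos : ∀ ε : ℝ, 0 < ε → 0 < c ε := fun ε hε => div_pos hε (hsq ε)
  have hc0 : c 0 = 0 := by simp [hcdef]
  -- choose the integer sequence m
  have hexp_tendsto : Tendsto (fun m : ℕ => Real.exp (-(α + 2 * Real.pi * m))) atTop (nhds 0) := by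
    apply Real.tendsto_exp_atBot.comp
    apply tendsto_neg_atTop_atBot.comp
    apply tendsto_atTop_add_const_left
    exact (tendsto_natCast_atTop_atTop).const_mul_atTop (by positivity)
  have hm : ∀ n : ℕ, ∃ m : ℕ, Real.exp (-(α + 2 * Real.pi * m)) < c (1/((n:ℝ)+1)) := fun n =>
    (hexp_tendsto.eventually_lt_const (hc_pos _ (by positivity))).exists
  choose m hm using hm
  set r : ℕ → ℝ := fun n => Real.exp (-(α + 2 * Real.pi * (m n))) with hrdef
  have hr_pos : ∀ n, 0 < r n := fun n => Real.exp_pos _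
  -- choose ε n by the intermediate value theorem
  have hε : ∀ n : ℕ, ∃ ε : ℝ, (0 < ε ∧ ε ≤ 1/((n:ℝ)+1)) ∧ c ε = r n := by
    intro n
    have hiv := intermediate_value_Icc (by positivity : (0:ℝ) ≤ 1/((n:ℝ)+1))
      (hc_cont.continuousOn (s := Icc 0 (1/((n:ℝ)+1))))
    have hrmem : r n ∈ Icc (c 0) (c (1/((n:ℝ)+1))) := by
      rw [hc0]; exact ⟨(hr_pos n).le, (hm n).le⟩
    obtain ⟨ε, hε1, hε2⟩ := hiv hrmem
    refine ⟨ε, ⟨?_, hε1.2⟩, hε2⟩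
    rcases hε1.1.lt_or_eq with h | h
    · exact h
    · exfalso; rw [← h, hc0] at hε2; exact (hr_pos n).ne' hε2.symm
  choose ε hε1 hε2 using hε
  -- ε n → 0 within Ioi 0
  have hε_tendsto : Tendsto ε atTop (nhdsWithin (0:ℝ) (Ioi 0)) := by
    rw [tendsto_nhdsWithin_iff]
    constructor
    · exact squeeze_zero (fun n => (hε1 n).1.le) (fun n => (hε1 n).2)
        tendsto_one_div_add_atTop_nhds_zero_nat
    · filter_upwards with n; exact (hε1 n).1
  -- r n → 0
  have hr_tendsto : Tendsto r atTop (nhds 0) := by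
    refine squeeze_zero (fun n => (hr_pos n).le) (fun n => (hm n).le) ?_
    have : Tendsto (fun n : ℕ => (1:ℝ)/(n+1)) atTop (nhds 0) :=
      tendsto_one_div_add_atTop_nhds_zero_nat
    have := (hc_cont.tendsto 0).comp this
    rwa [hc0] at this
  -- the value along the subsequence
  set F : ℝ → ℂ := fun εv : ℝ => ∫ x : ℝ, Complex.exp (Complex.I * Real.log (1 + |x|)) *
      (((εv / Real.sqrt (t ^ 2 + εv ^ 4)) * ρ ((εv / Real.sqrt (t ^ 2 + εv ^ 4)) * x) : ℝ) : ℂ)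
    with hFdef
  have hFval : ∀ n : ℕ, F (ε n) = 2 * Complex.exp (Complex.I * (α:ℂ)) *
      ∫ y in Ioi (0:ℝ), Complex.exp (Complex.I * Real.log (r n + y)) * ((ρ y : ℝ) : ℂ) := by
    intro n
    have hcε : 0 < c (ε n) := hc_pos _ (hε1 n).1
    have h1 : F (ε n) = 2 * Complex.exp (-(Complex.I * Real.log (c (ε n)))) *
        ∫ y in Ioi (0:ℝ), Complex.exp (Complex.I * Real.log (c (ε n) + y)) * ((ρ y : ℝ) : ℂ) :=
      step1 ρ hρeven hρnn hρint hρmeas hcε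
    rw [h1, hε2 n]
    congr 2
    rw [hrdef]
    simp only [Real.log_exp]
    push_cast
    rw [show -(Complex.I * -((α:ℂ) + 2 * (Real.pi:ℂ) * (m n))) =
      Complex.I * (α:ℂ) + (m n : ℂ) * (2 * (Real.pi:ℂ) * Complex.I) from by ring,
      Complex.exp_add]
    rw [show ((m n : ℂ)) = ((m n : ℤ) : ℂ) from by push_cast; ring,
      Complex.exp_int_mul_two_pi_mul_I, mul_one]
  -- convergence of the values
  have hconv : Tendsto (fun n => F (ε n)) atTop (nhds (2 * γ * Complex.exp (Complex.I * (α:ℂ)))) := by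
    have h2 := step2 ρ hρnn hρint hρmeas r hr_tendsto
    have h3 := h2.const_mul (2 * Complex.exp (Complex.I * (α:ℂ)))
    simp_rw [← hFval] at h3
    rw [← hγ] at h3
    convert h3 using 2
    ring
  exact MapClusterPt.of_comp hε_tendsto hconv.mapClusterPt
end
end

section
/- For every almost periodic function f on ℝ, the mean m(f) = lim_{R→∞}(1/(2R))∫_{−R}^R f(x)dx exists and also equals lim_{R→∞}(1/R)∫_0^R f(x)dx. -/
open MeasureTheory Filter

noncomputable section

/-- A trigonometric polynomial on `ℝ`. -/
def IsTrigPoly (p : ℝ → ℂ) : Prop :=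
  ∃ (m : ℕ) (a : Fin m → ℂ) (ξ : Fin m → ℝ),
    ∀ x, p x = ∑ j, a j * Complex.exp (Complex.I * x * ξ j)

/-- Almost periodic functions: uniform limits of trigonometric polynomials. -/
def IsAlmostPeriodic (f : ℝ → ℂ) : Prop :=
  ∀ δ : ℝ, 0 < δ → ∃ p : ℝ → ℂ, IsTrigPoly p ∧ ∀ x, ‖f x - p x‖ ≤ δ

/-! ### Auxiliary lemmas -/

lemma trigPoly_continuous {p : ℝ → ℂ} (hp : IsTrigPoly p) : Continuous p := by
  obtain ⟨m, a, ξ, h⟩ := hp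
  have : p = fun x : ℝ => ∑ j, a j * Complex.exp (Complex.I * x * ξ j) := funext h
  rw [this]
  exact continuous_finset_sum _ fun j _ => by fun_prop

lemma exp_norm_one (c : ℂ) (hc : c.re = 0) : ‖Complex.exp c‖ ≤ 1 := by
  rw [Complex.norm_exp, hc]
  simp

/-- One-sided average of a single exponential. -/
lemma avgA_exp (ω : ℝ) :
    Tendsto (fun R : ℝ => (1 / R : ℂ) * ∫ x in (0:ℝ)..R, Complex.exp (Complex.I * x * ω))
      atTop (nhds (if ω = 0 then 1 else 0)) := by
  by_cases hω : ω = 0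
  · simp only [hω, if_pos rfl]
    apply tendsto_const_nhds.congr'
    filter_upwards [eventually_ge_atTop (1:ℝ)] with R hR
    have hR0 : (R : ℂ) ≠ 0 := by
      exact_mod_cast ne_of_gt (lt_of_lt_of_le one_pos hR)
    simp only [Complex.ofReal_zero, mul_zero, Complex.exp_zero]
    rw [intervalIntegral.integral_const, sub_zero]
    rw [Complex.real_smul]
    push_cast
    field_simp
  · simp only [if_neg hω]
    set c : ℂ := Complex.I * ω with hc
    have hc0 : c ≠ 0 := by
      simp [hc, Complex.I_ne_zero, Complex.ofReal_eq_zero, hω]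
    have key : ∀ R : ℝ, (∫ x in (0:ℝ)..R, Complex.exp (Complex.I * x * ω)) =
        (Complex.exp (c * R) - 1) / c := by
      intro R
      have h1 : (fun x : ℝ => Complex.exp (Complex.I * x * ω)) =
          fun x : ℝ => Complex.exp (c * x) := by
        funext x; rw [hc]; congr 1; ring
      rw [h1, integral_exp_mul_complex hc0]
      norm_num
    apply squeeze_zero_norm' (a := fun R : ℝ => (2 / ‖c‖) / R)
    · filter_upwards [eventually_ge_atTop (1:ℝ)] with R hR
      have hRpos : (0:ℝ) < R := lt_of_lt_of_le one_pos hR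
      rw [key R, norm_mul, norm_div, norm_div, norm_one]
      have h2 : ‖Complex.exp (c * R) - 1‖ ≤ 2 := by
        calc ‖Complex.exp (c * R) - 1‖ ≤ ‖Complex.exp (c * R)‖ + ‖(1:ℂ)‖ := norm_sub_le _ _
          _ ≤ 1 + 1 := add_le_add (exp_norm_one _ (by simp [hc])) (by simp)
          _ = 2 := by norm_num
      have hnR : ‖(R:ℂ)‖ = R := by
        rw [Complex.norm_real, Real.norm_eq_abs, abs_of_pos hRpos]
      rw [hnR]
      calc 1 / R * (‖Complex.exp (c * R) - 1‖ / ‖c‖)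
          ≤ 1 / R * (2 / ‖c‖) := by
            apply mul_le_mul_of_nonneg_left _ (by positivity)
            exact div_le_div_of_nonneg_right h2 (norm_nonneg c)
        _ = (2 / ‖c‖) / R := by ring
    · exact Tendsto.div_atTop tendsto_const_nhds tendsto_id

/-- Symmetric average of a single exponential. -/
lemma avgB_exp (ω : ℝ) :
    Tendsto (fun R : ℝ => (1 / (2 * R) : ℂ) * ∫ x in (-R)..R, Complex.exp (Complex.I * x * ω))
      atTop (nhds (if ω = 0 then 1 else 0)) := by
  by_cases hω : ω = 0
  · simp only [hω, if_pos rfl]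
    apply tendsto_const_nhds.congr'
    filter_upwards [eventually_ge_atTop (1:ℝ)] with R hR
    have hR0 : (R : ℂ) ≠ 0 := by
      exact_mod_cast ne_of_gt (lt_of_lt_of_le one_pos hR)
    simp only [Complex.ofReal_zero, mul_zero, Complex.exp_zero]
    rw [intervalIntegral.integral_const]
    rw [Complex.real_smul]
    push_cast
    field_simp
    ring
  · simp only [if_neg hω]
    set c : ℂ := Complex.I * ω with hc
    have hc0 : c ≠ 0 := by
      simp [hc, Complex.I_ne_zero, Complex.ofReal_eq_zero, hω]
    have key : ∀ R : ℝ, (∫ x in (-R)..R, Complex.exp (Complex.I * x * ω)) =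
        (Complex.exp (c * R) - Complex.exp (c * ((-R : ℝ) : ℂ))) / c := by
      intro R
      have h1 : (fun x : ℝ => Complex.exp (Complex.I * x * ω)) =
          fun x : ℝ => Complex.exp (c * x) := by
        funext x; rw [hc]; congr 1; ring
      rw [h1, integral_exp_mul_complex hc0]
    apply squeeze_zero_norm' (a := fun R : ℝ => (2 / ‖c‖) / R)
    · filter_upwards [eventually_ge_atTop (1:ℝ)] with R hR
      have hRpos : (0:ℝ) < R := lt_of_lt_of_le one_pos hR
      rw [key R, norm_mul, norm_div, norm_div, norm_one]
      have h2 : ‖Complex.exp (c * R) - Complex.exp (c * ((-R : ℝ) : ℂ))‖ ≤ 2 := by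
        calc ‖Complex.exp (c * R) - Complex.exp (c * ((-R : ℝ) : ℂ))‖
            ≤ ‖Complex.exp (c * R)‖ + ‖Complex.exp (c * ((-R : ℝ) : ℂ))‖ := norm_sub_le _ _
          _ ≤ 1 + 1 := add_le_add (exp_norm_one _ (by simp [hc])) (exp_norm_one _ (by simp [hc]))
          _ = 2 := by norm_num
      have hn2R : ‖(2 * (R:ℂ))‖ = 2 * R := by
        rw [show ((2:ℂ) * R) = ((2 * R : ℝ) : ℂ) by push_cast; ring, Complex.norm_real,
          Real.norm_eq_abs, abs_of_pos (by positivity)]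
      rw [hn2R]
      calc 1 / (2 * R) * (‖Complex.exp (c * R) - Complex.exp (c * ((-R : ℝ) : ℂ))‖ / ‖c‖)
          ≤ 1 / (2 * R) * (2 / ‖c‖) := by
            apply mul_le_mul_of_nonneg_left _ (by positivity)
            exact div_le_div_of_nonneg_right h2 (norm_nonneg c)
        _ = (2 / ‖c‖) / (2 * R) := by ring
        _ ≤ (2 / ‖c‖) / R :=
            div_le_div_of_nonneg_left (by positivity) hRpos (by linarith)
    · exact Tendsto.div_atTop tendsto_const_nhds tendsto_id

lemma trigPoly_limits {p : ℝ → ℂ} (hp : IsTrigPoly p) :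
    ∃ c : ℂ,
      Tendsto (fun R : ℝ => (1 / (2 * R) : ℂ) * ∫ x in (-R)..R, p x) atTop (nhds c) ∧
      Tendsto (fun R : ℝ => (1 / R : ℂ) * ∫ x in (0:ℝ)..R, p x) atTop (nhds c) := by
  obtain ⟨m, a, ξ, h⟩ := hp
  have hint : ∀ (j : Fin m) (u v : ℝ),
      IntervalIntegrable (fun x : ℝ => a j * Complex.exp (Complex.I * x * ξ j)) volume u v :=
    fun j u v => (Continuous.intervalIntegrable (by fun_prop) u v)
  refine ⟨∑ j, a j * (if ξ j = 0 then 1 else 0), ?_, ?_⟩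
  · have heq : (fun R : ℝ => (1 / (2 * R) : ℂ) * ∫ x in (-R)..R, p x) =
        fun R : ℝ => ∑ j, a j * ((1 / (2 * R) : ℂ) * ∫ x in (-R)..R,
          Complex.exp (Complex.I * x * ξ j)) := by
      funext R
      rw [show (fun x : ℝ => p x) = fun x : ℝ => ∑ j, a j * Complex.exp (Complex.I * x * ξ j)
        from funext h]
      rw [intervalIntegral.integral_finset_sum (fun j _ => hint j _ _), Finset.mul_sum]
      refine Finset.sum_congr rfl fun j _ => ?_
      rw [intervalIntegral.integral_const_mul]
      ring
    rw [heq]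
    exact tendsto_finset_sum _ fun j _ => (avgB_exp (ξ j)).const_mul (a j)
  · have heq : (fun R : ℝ => (1 / R : ℂ) * ∫ x in (0:ℝ)..R, p x) =
        fun R : ℝ => ∑ j, a j * ((1 / R : ℂ) * ∫ x in (0:ℝ)..R,
          Complex.exp (Complex.I * x * ξ j)) := by
      funext R
      rw [show (fun x : ℝ => p x) = fun x : ℝ => ∑ j, a j * Complex.exp (Complex.I * x * ξ j)
        from funext h]
      rw [intervalIntegral.integral_finset_sum (fun j _ => hint j _ _), Finset.mul_sum]
      refine Finset.sum_congr rfl fun j _ => ?_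
      rw [intervalIntegral.integral_const_mul]
      ring
    rw [heq]
    exact tendsto_finset_sum _ fun j _ => (avgA_exp (ξ j)).const_mul (a j)

/-- Difference estimate, one-sided. -/
lemma diffA {f p : ℝ → ℂ} (hf : Continuous f) (hp : Continuous p) {δ : ℝ}
    (hδ : ∀ x, ‖f x - p x‖ ≤ δ) {R : ℝ} (hR : 1 ≤ R) :
    ‖(1 / R : ℂ) * (∫ x in (0:ℝ)..R, f x) - (1 / R : ℂ) * ∫ x in (0:ℝ)..R, p x‖ ≤ δ := by
  have hRpos : (0:ℝ) < R := lt_of_lt_of_le one_pos hR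
  rw [← mul_sub, ← intervalIntegral.integral_sub (hf.intervalIntegrable _ _)
    (hp.intervalIntegrable _ _), norm_mul]
  have h1 : ‖(1 / R : ℂ)‖ = 1 / R := by
    rw [norm_div, norm_one, Complex.norm_real, Real.norm_eq_abs, abs_of_pos hRpos]
  have h2 : ‖∫ x in (0:ℝ)..R, (f x - p x)‖ ≤ δ * |R - 0| :=
    intervalIntegral.norm_integral_le_of_norm_le_const fun x _ => hδ x
  calc ‖(1 / R : ℂ)‖ * ‖∫ x in (0:ℝ)..R, (f x - p x)‖
      ≤ (1 / R) * (δ * |R - 0|) := by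
        rw [h1]
        exact mul_le_mul_of_nonneg_left h2 (by positivity)
    _ = δ := by
        rw [sub_zero, abs_of_pos hRpos]
        field_simp

/-- Difference estimate, symmetric. -/
lemma diffB {f p : ℝ → ℂ} (hf : Continuous f) (hp : Continuous p) {δ : ℝ}
    (hδ : ∀ x, ‖f x - p x‖ ≤ δ) {R : ℝ} (hR : 1 ≤ R) :
    ‖(1 / (2 * R) : ℂ) * (∫ x in (-R)..R, f x) - (1 / (2 * R) : ℂ) * ∫ x in (-R)..R, p x‖ ≤ δ := by
  have hRpos : (0:ℝ) < R := lt_of_lt_of_le one_pos hR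
  rw [← mul_sub, ← intervalIntegral.integral_sub (hf.intervalIntegrable _ _)
    (hp.intervalIntegrable _ _), norm_mul]
  have h1 : ‖(1 / (2 * R) : ℂ)‖ = 1 / (2 * R) := by
    rw [norm_div, norm_one, show ((2:ℂ) * R) = ((2 * R : ℝ) : ℂ) by push_cast; ring,
      Complex.norm_real, Real.norm_eq_abs, abs_of_pos (by positivity)]
  have h2 : ‖∫ x in (-R)..R, (f x - p x)‖ ≤ δ * |R - (-R)| :=
    intervalIntegral.norm_integral_le_of_norm_le_const fun x _ => hδ x
  calc ‖(1 / (2 * R) : ℂ)‖ * ‖∫ x in (-R)..R, (f x - p x)‖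
      ≤ (1 / (2 * R)) * (δ * |R - (-R)|) := by
        rw [h1]
        exact mul_le_mul_of_nonneg_left h2 (by positivity)
    _ = δ := by
        rw [show R - (-R) = 2 * R by ring, abs_of_pos (by positivity)]
        field_simp

/-- A function eventually uniformly approximated by convergent functions converges. -/
lemma tendsto_of_approx (g : ℝ → ℂ)
    (H : ∀ ε : ℝ, 0 < ε → ∃ h : ℝ → ℂ, (∃ c, Tendsto h atTop (nhds c)) ∧
      ∀ᶠ R in atTop, ‖g R - h R‖ ≤ ε) :
    ∃ M, Tendsto g atTop (nhds M) := by
  have hc : Cauchy (map g atTop) := by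
    rw [Metric.cauchy_iff]
    refine ⟨map_neBot, fun ε hε => ?_⟩
    obtain ⟨h, ⟨c, hc⟩, hbound⟩ := H (ε / 4) (by positivity)
    have h1 : ∀ᶠ R in atTop, dist (h R) c < ε / 4 :=
      hc (Metric.ball_mem_nhds c (by positivity))
    have h2 : ∀ᶠ R in atTop, dist (g R) c < ε / 2 := by
      filter_upwards [hbound, h1] with R hb h1
      calc dist (g R) c ≤ dist (g R) (h R) + dist (h R) c := dist_triangle _ _ _
        _ < ε / 4 + ε / 4 := by
            rw [dist_eq_norm]
            exact add_lt_add_of_le_of_lt hb h1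
        _ = ε / 2 := by ring
    refine ⟨g '' {R | dist (g R) c < ε / 2}, ?_, ?_⟩
    · rw [mem_map]
      filter_upwards [h2] with R hR
      exact Set.mem_image_of_mem g hR
    · rintro x ⟨Rx, hRx, rfl⟩ y ⟨Ry, hRy, rfl⟩
      calc dist (g Rx) (g Ry) ≤ dist (g Rx) c + dist c (g Ry) := dist_triangle _ _ _
        _ < ε / 2 + ε / 2 := add_lt_add hRx (by rwa [dist_comm])
        _ = ε := by ring
  exact CompleteSpace.complete hc

/-- every almost periodic function on `ℝ` possesses a mean
`m(f) = lim_{R→∞} (1/(2R)) ∫_{-R}^R f`, which also equals `lim_{R→∞} (1/R) ∫_0^R f`. -/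
theorem almost_periodic_mean_exists
    (f : ℝ → ℂ) (hf_cont : Continuous f) (hf : IsAlmostPeriodic f) :
    ∃ M : ℂ,
      Tendsto (fun R : ℝ => (1 / (2 * R) : ℂ) * ∫ x in (-R)..R, f x) atTop (nhds M) ∧
      Tendsto (fun R : ℝ => (1 / R : ℂ) * ∫ x in (0:ℝ)..R, f x) atTop (nhds M) := by
  obtain ⟨MB, hMB⟩ : ∃ M, Tendsto (fun R : ℝ => (1 / (2 * R) : ℂ) * ∫ x in (-R)..R, f x)
      atTop (nhds M) := by
    apply tendsto_of_approx
    intro ε hε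
    obtain ⟨p, hp, hbound⟩ := hf ε hε
    refine ⟨fun R => (1 / (2 * R) : ℂ) * ∫ x in (-R)..R, p x, ?_, ?_⟩
    · obtain ⟨c, hc, _⟩ := trigPoly_limits hp
      exact ⟨c, hc⟩
    · filter_upwards [eventually_ge_atTop (1:ℝ)] with R hR
      exact diffB hf_cont (trigPoly_continuous hp) hbound hR
  obtain ⟨MA, hMA⟩ : ∃ M, Tendsto (fun R : ℝ => (1 / R : ℂ) * ∫ x in (0:ℝ)..R, f x)
      atTop (nhds M) := by
    apply tendsto_of_approx
    intro ε hε
    obtain ⟨p, hp, hbound⟩ := hf ε hε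
    refine ⟨fun R => (1 / R : ℂ) * ∫ x in (0:ℝ)..R, p x, ?_, ?_⟩
    · obtain ⟨c, _, hc⟩ := trigPoly_limits hp
      exact ⟨c, hc⟩
    · filter_upwards [eventually_ge_atTop (1:ℝ)] with R hR
      exact diffA hf_cont (trigPoly_continuous hp) hbound hR
  have heq : MB = MA := by
    apply eq_of_forall_dist_le
    intro ε hε
    obtain ⟨p, hp, hbound⟩ := hf (ε / 4) (by positivity)
    obtain ⟨c, hcB, hcA⟩ := trigPoly_limits hp
    have hdB : dist MB c ≤ ε / 4 := by
      apply le_of_tendsto (hMB.dist hcB)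
      filter_upwards [eventually_ge_atTop (1:ℝ)] with R hR
      rw [dist_eq_norm]
      exact diffB hf_cont (trigPoly_continuous hp) hbound hR
    have hdA : dist MA c ≤ ε / 4 := by
      apply le_of_tendsto (hMA.dist hcA)
      filter_upwards [eventually_ge_atTop (1:ℝ)] with R hR
      rw [dist_eq_norm]
      exact diffA hf_cont (trigPoly_continuous hp) hbound hR
    calc dist MB MA ≤ dist MB c + dist c MA := dist_triangle _ _ _
      _ ≤ ε / 4 + ε / 4 := add_le_add hdB (by rwa [dist_comm])
      _ ≤ ε := by linarith
  exact ⟨MB, hMB, heq ▸ hMA⟩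
end
end
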